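/- Let γ ∈ ℝ, Δ_s = Φ⁻¹(s + (1−s)Φ(γ)), and c_{y,k}(θ,σ) = a·Δ_a^k + ∫_a^{1−b} Δ_s^k ds + b·Δ_{1−b}^k where γ = (t−θ)/σ. Then ∂c_{y,k}/∂a = a(1 − Φ(γ))·kΔ_a^{k−1}/φ(Δ_a) and ∂c_{y,k}/∂b = −b(1 − Φ(γ))·kΔ_{1−b}^{k−1}/φ(Δ_{1−b}). -/

import Mathlib

open MeasureTheory ProbabilityTheory Set Filter

noncomputable def stdPhi (x : ℝ) : ℝ :=
  ∫ t in Set.Iic x, Real.exp (-t ^ 2 / 2) / Real.sqrt (2 * Real.pi)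

noncomputable def stdphi (x : ℝ) : ℝ := Real.exp (-x ^ 2 / 2) / Real.sqrt (2 * Real.pi)

lemma stdphi_pos (x : ℝ) : 0 < stdphi x := by
  unfold stdphi
  positivity

lemma stdphi_eq : stdphi = fun t : ℝ => Real.exp (-(1/2) * t ^ 2) / Real.sqrt (2 * Real.pi) := by
  funext t
  unfold stdphi
  ring_nf

lemma stdphi_integrable : MeasureTheory.Integrable stdphi := by
  rw [stdphi_eq]
  exact (integrable_exp_neg_mul_sq (by norm_num : (0:ℝ) < 1/2)).div_const _

lemma stdphi_continuous : Continuous stdphi := by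
  unfold stdphi
  exact (Real.continuous_exp.comp (by continuity)).div_const _

lemma stdPhi_eq (x : ℝ) : stdPhi x = stdPhi 0 + ∫ t in (0:ℝ)..x, stdphi t := by
  have h := intervalIntegral.integral_Iic_sub_Iic (μ := volume) (f := stdphi)
    (stdphi_integrable.integrableOn) (stdphi_integrable.integrableOn) (a := 0) (b := x)
  have hx : stdPhi x = ∫ t in Set.Iic x, stdphi t := rfl
  have h0 : stdPhi 0 = ∫ t in Set.Iic (0:ℝ), stdphi t := rfl
  rw [hx, h0]
  linarith [h]

lemma hasDerivAt_stdPhi (x : ℝ) : HasDerivAt stdPhi (stdphi x) x := by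
  have h : HasDerivAt (fun u => stdPhi 0 + ∫ t in (0:ℝ)..u, stdphi t) (stdphi x) x := by
    have := (intervalIntegral.integral_hasDerivAt_right
      (stdphi_integrable.intervalIntegrable)
      (stdphi_integrable.aestronglyMeasurable.stronglyMeasurableAtFilter)
      (stdphi_continuous.continuousAt) : HasDerivAt (fun u => ∫ t in (0:ℝ)..u, stdphi t) (stdphi x) x)
    simpa using (this.const_add (stdPhi 0))
  exact h.congr_of_eventuallyEq (Filter.Eventually.of_forall fun y => stdPhi_eq y)

lemma stdPhi_strictMono : StrictMono stdPhi :=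
  strictMono_of_hasDerivAt_pos hasDerivAt_stdPhi stdphi_pos

lemma stdPhi_pos (x : ℝ) : 0 < stdPhi x := by
  have : (0:ℝ) < ∫ t in Set.Iic x, stdphi t := by
    rw [MeasureTheory.setIntegral_pos_iff_support_of_nonneg_ae
      (Filter.Eventually.of_forall fun t => (stdphi_pos t).le)
      stdphi_integrable.integrableOn]
    have hs : (Function.support stdphi ∩ Set.Iic x) = Set.Iic x := by
      ext t
      simp [Function.mem_support, (stdphi_pos t).ne']
    rw [hs, Real.volume_Iic]
    simp
  exact this

lemma stdphi_total : ∫ t : ℝ, stdphi t = 1 := by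
  rw [stdphi_eq]
  rw [MeasureTheory.integral_div, integral_gaussian]
  rw [show Real.pi / (1/2) = 2 * Real.pi by ring]
  have : Real.sqrt (2 * Real.pi) ≠ 0 := by positivity
  field_simp

lemma stdPhi_lt_one (x : ℝ) : stdPhi x < 1 := by
  have hsplit : stdPhi x + (∫ t in Set.Ioi x, stdphi t) = 1 := by
    have := intervalIntegral.integral_Iic_add_Ioi (μ := volume) (b := x) (f := stdphi)
      stdphi_integrable.integrableOn stdphi_integrable.integrableOn
    rw [stdphi_total] at this
    exact this
  have hpos : (0:ℝ) < ∫ t in Set.Ioi x, stdphi t := by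
    rw [MeasureTheory.setIntegral_pos_iff_support_of_nonneg_ae
      (Filter.Eventually.of_forall fun t => (stdphi_pos t).le)
      stdphi_integrable.integrableOn]
    have hs : (Function.support stdphi ∩ Set.Ioi x) = Set.Ioi x := by
      ext t
      simp [Function.mem_support, (stdphi_pos t).ne']
    rw [hs, Real.volume_Ioi]
    simp
  linarith

lemma continuousAt_Phinv (Φinv : ℝ → ℝ)
    (hΦinv : ∀ v ∈ Set.Ioo (0 : ℝ) 1, stdPhi (Φinv v) = v)
    {v : ℝ} (hv : v ∈ Set.Ioo (0:ℝ) 1) : ContinuousAt Φinv v := by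
  rw [Metric.continuousAt_iff']
  intro ε hε
  set x₀ := Φinv v with hx₀
  have hvx : stdPhi x₀ = v := hΦinv v hv
  have hlo : stdPhi (x₀ - ε) < v := by
    rw [← hvx]; exact stdPhi_strictMono (by linarith)
  have hhi : v < stdPhi (x₀ + ε) := by
    rw [← hvx]; exact stdPhi_strictMono (by linarith)
  have hU : Set.Ioo (stdPhi (x₀ - ε)) (stdPhi (x₀ + ε)) ∈ nhds v :=
    Ioo_mem_nhds hlo hhi
  filter_upwards [hU] with w hw
  have hw01 : w ∈ Set.Ioo (0:ℝ) 1 :=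
    ⟨lt_trans (stdPhi_pos _) hw.1, lt_trans hw.2 (stdPhi_lt_one _)⟩
  have hww : stdPhi (Φinv w) = w := hΦinv w hw01
  have h1 : Φinv w < x₀ + ε := by
    by_contra h
    push_neg at h
    have := stdPhi_strictMono.monotone h
    rw [hww] at this
    exact absurd hw.2 (not_lt.2 this)
  have h2 : x₀ - ε < Φinv w := by
    by_contra h
    push_neg at h
    have := stdPhi_strictMono.monotone h
    rw [hww] at this
    exact absurd hw.1 (not_lt.2 this)
  rw [Real.dist_eq, abs_lt]
  constructor <;> linarith

lemma hasDerivAt_Phinv (Φinv : ℝ → ℝ)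
    (hΦinv : ∀ v ∈ Set.Ioo (0 : ℝ) 1, stdPhi (Φinv v) = v)
    {v : ℝ} (hv : v ∈ Set.Ioo (0:ℝ) 1) :
    HasDerivAt Φinv (stdphi (Φinv v))⁻¹ v := by
  apply HasDerivAt.of_local_left_inverse (continuousAt_Phinv Φinv hΦinv hv)
    (hasDerivAt_stdPhi (Φinv v)) (stdphi_pos _).ne'
  filter_upwards [Ioo_mem_nhds hv.1 hv.2] with w hw
  exact hΦinv w hw

theorem stmt18 (a b γ : ℝ) (k : ℕ) (hk : 1 ≤ k)
    (ha : 0 < a) (hab : a < 1 - b) (hb1 : 1 - b < 1)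
    (Φinv : ℝ → ℝ) (hΦinv : ∀ v ∈ Set.Ioo (0 : ℝ) 1, stdPhi (Φinv v) = v)
    (Δ : ℝ → ℝ) (hΔ : ∀ s, Δ s = Φinv (s + (1 - s) * stdPhi γ)) :
    HasDerivAt
      (fun a' : ℝ => a' * (Δ a') ^ k + (∫ s in a'..(1 - b), (Δ s) ^ k)
        + b * (Δ (1 - b)) ^ k)
      (a * (1 - stdPhi γ) * ((k : ℝ) * (Δ a) ^ (k - 1) / stdphi (Δ a))) a
    ∧ HasDerivAt
      (fun b' : ℝ => a * (Δ a) ^ k + (∫ s in a..(1 - b'), (Δ s) ^ k)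
        + b' * (Δ (1 - b')) ^ k)
      (-(b * (1 - stdPhi γ) * ((k : ℝ) * (Δ (1 - b)) ^ (k - 1) / stdphi (Δ (1 - b))))) b := by
  set Φγ := stdPhi γ with hΦγ
  have h0 : 0 < Φγ := stdPhi_pos γ
  have h1 : Φγ < 1 := stdPhi_lt_one γ
  -- membership of F s in (0,1)
  have hF : ∀ s ∈ Set.Ioo (0:ℝ) 1, (s + (1 - s) * Φγ) ∈ Set.Ioo (0:ℝ) 1 := by
    intro s hs
    constructor
    · nlinarith [hs.1, hs.2]
    · nlinarith [hs.1, hs.2]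
  -- derivative of Δ on (0,1)
  have hΔderiv : ∀ s ∈ Set.Ioo (0:ℝ) 1,
      HasDerivAt Δ ((1 - Φγ) * (stdphi (Δ s))⁻¹) s := by
    intro s hs
    have hFd : HasDerivAt (fun s : ℝ => s + (1 - s) * Φγ) (1 - Φγ) s := by
      have h := (hasDerivAt_id s).add
        (((hasDerivAt_const s (1:ℝ)).sub (hasDerivAt_id s)).mul_const Φγ)
      refine h.congr_deriv ?_
      ring
    have hinv := hasDerivAt_Phinv Φinv hΦinv (hF s hs)
    have hcomp := hinv.comp s hFd
    have hΔeq : Δ = fun s => Φinv (s + (1 - s) * Φγ) := funext hΔ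
    rw [hΔ s]
    rw [hΔeq]
    refine hcomp.congr_deriv ?_
    ring
  have ha01 : a ∈ Set.Ioo (0:ℝ) 1 := ⟨ha, lt_trans hab hb1⟩
  have hb01 : (1 - b) ∈ Set.Ioo (0:ℝ) 1 := ⟨lt_trans ha hab, hb1⟩
  -- the integrand
  set f : ℝ → ℝ := fun s => (Δ s) ^ k with hf
  have hfcont : ∀ s ∈ Set.Ioo (0:ℝ) 1, ContinuousAt f s := fun s hs =>
    ((hΔderiv s hs).continuousAt).pow k
  have hsub : Set.uIcc a (1 - b) ⊆ Set.Ioo (0:ℝ) 1 := by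
    rw [Set.uIcc_of_le hab.le]
    intro x hx
    exact ⟨lt_of_lt_of_le ha hx.1, lt_of_le_of_lt hx.2 hb1⟩
  have hfint : IntervalIntegrable f volume a (1 - b) := by
    apply ContinuousOn.intervalIntegrable
    exact fun x hx => (hfcont x (hsub hx)).continuousWithinAt
  have hmeas : ∀ x ∈ Set.Ioo (0:ℝ) 1, StronglyMeasurableAtFilter f (nhds x) volume :=
    ContinuousAt.stronglyMeasurableAtFilter isOpen_Ioo hfcont
  constructor
  · -- derivative in a
    have hterm1 : HasDerivAt (fun a' : ℝ => a' * (Δ a') ^ k)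
        (1 * (Δ a) ^ k + a * ((k : ℝ) * (Δ a) ^ (k - 1) * ((1 - Φγ) * (stdphi (Δ a))⁻¹))) a :=
      (hasDerivAt_id a).mul ((hΔderiv a ha01).pow k)
    have hterm2 : HasDerivAt (fun a' : ℝ => ∫ s in a'..(1 - b), f s) (-f a) a :=
      intervalIntegral.integral_hasDerivAt_left hfint (hmeas a ha01) (hfcont a ha01)
    have h := (hterm1.add hterm2).add_const (b * (Δ (1 - b)) ^ k)
    refine h.congr_deriv ?_
    have hφ : stdphi (Δ a) ≠ 0 := (stdphi_pos _).ne'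
    field_simp [hf]
    ring
  · -- derivative in b
    have hneg : HasDerivAt (fun b' : ℝ => 1 - b') (-1 : ℝ) b := by
      have h := (hasDerivAt_const b (1:ℝ)).sub (hasDerivAt_id b)
      refine h.congr_deriv ?_
      ring
    have hG : HasDerivAt (fun u : ℝ => ∫ s in a..u, f s) (f (1 - b)) (1 - b) :=
      intervalIntegral.integral_hasDerivAt_right hfint (hmeas (1 - b) hb01) (hfcont (1 - b) hb01)
    have hterm2 : HasDerivAt (fun b' : ℝ => ∫ s in a..(1 - b'), f s) (f (1 - b) * (-1)) b :=
      hG.comp b hneg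
    have hΔb : HasDerivAt (fun b' : ℝ => Δ (1 - b'))
        (((1 - Φγ) * (stdphi (Δ (1 - b)))⁻¹) * (-1)) b :=
      (hΔderiv (1 - b) hb01).comp b hneg
    have hterm3 : HasDerivAt (fun b' : ℝ => b' * (Δ (1 - b')) ^ k)
        (1 * (Δ (1 - b)) ^ k + b * ((k : ℝ) * (Δ (1 - b)) ^ (k - 1) *
          (((1 - Φγ) * (stdphi (Δ (1 - b)))⁻¹) * (-1)))) b :=
      (hasDerivAt_id b).mul (hΔb.pow k)
    have h := ((hterm2.const_add (a * (Δ a) ^ k)).add hterm3)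
    refine h.congr_deriv ?_
    have hφ : stdphi (Δ (1 - b)) ≠ 0 := (stdphi_pos _).ne'
    field_simp [hf]
    ring
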